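/- For the Bell pair (𝒜, ℬ) with A₁ = ½⁻¹ᐟ²(λ₄+λ₁₁), A₂ = ½⁻¹ᐟ²(λ₁₀−λ₁₂), A₃ = −½(λ₁+λ₃−λ₁₃+λ₁₅), B₁ = ½⁻¹ᐟ²(λ₇+λ₉), B₂ = −½⁻¹ᐟ²(λ₅+λ₈), B₃ = ½(λ₁−λ₃−λ₁₃−λ₁₅), every vector Ψ_{r,φ,ϑ} = (r/√2)cos φ e₁ − (r/√2)cos φ e^{2iϑ} e₂ + r sin φ e^{iϑ} e₃ + i√(1−r²) e^{iϑ} e₄ (r ∈ [0,1], φ ∈ [0,π/2], ϑ ∈ [0,2π]) satisfies ω_{Ψ}(Aᵢ) = 0 and ω_{Ψ}(Bⱼ) = 0 for all i, j = 1,2,3. -/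
import Mathlib


open Matrix Kronecker ComplexOrder

noncomputable def σp : Fin 3 → Matrix (Fin 2) (Fin 2) ℂ
  | 0 => !![0, 1; 1, 0]
  | 1 => !![0, -Complex.I; Complex.I, 0]
  | 2 => !![1, 0; 0, -1]

noncomputable def kr (A B : Matrix (Fin 2) (Fin 2) ℂ) : Matrix (Fin 4) (Fin 4) ℂ :=
  Matrix.reindex finProdFinEquiv finProdFinEquiv (A ⊗ₖ B)

noncomputable def lam : ℕ → Matrix (Fin 4) (Fin 4) ℂ
  | 1 => kr 1 (σp 0)
  | 2 => kr 1 (σp 1)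
  | 3 => kr 1 (σp 2)
  | 4 => kr (σp 0) 1
  | 5 => kr (σp 1) 1
  | 6 => kr (σp 2) 1
  | 7 => kr (σp 0) (σp 0)
  | 8 => kr (σp 0) (σp 1)
  | 9 => kr (σp 0) (σp 2)
  | 10 => kr (σp 1) (σp 0)
  | 11 => kr (σp 1) (σp 1)
  | 12 => kr (σp 1) (σp 2)
  | 13 => kr (σp 2) (σp 0)
  | 14 => kr (σp 2) (σp 1)
  | 15 => kr (σp 2) (σp 2)
  | _ => 0

noncomputable def vecState (Ψ : Fin 4 → ℂ) (X : Matrix (Fin 4) (Fin 4) ℂ) : ℂ :=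
  star Ψ ⬝ᵥ (X *ᵥ Ψ)

noncomputable def opNorm (Q : Matrix (Fin 3) (Fin 3) ℝ) : ℝ :=
  ‖(Matrix.toEuclideanLin Q).toContinuousLinearMap‖

noncomputable def corrMat (ω : Matrix (Fin 4) (Fin 4) ℂ → ℂ)
    (A B : Fin 3 → Matrix (Fin 4) (Fin 4) ℂ) : Matrix (Fin 3) (Fin 3) ℝ :=
  Matrix.of fun i j => (ω (A i * B j) - ω (A i) * ω (B j)).re

/-- The primed Bell pair generators `A'₁, A'₂, A'₃`. -/
noncomputable def Ap : Fin 3 → Matrix (Fin 4) (Fin 4) ℂ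
  | 0 => -((1 / 2 : ℂ) • (lam 3 - lam 6 - lam 7 + lam 11))
  | 1 => -lam 10
  | 2 => -((1 / 2 : ℂ) • (lam 3 + lam 6 - lam 7 - lam 11))

/-- The primed Bell pair generators `B'₁, B'₂, B'₃`. -/
noncomputable def Bp : Fin 3 → Matrix (Fin 4) (Fin 4) ℂ
  | 0 => ((Real.sqrt 2 : ℂ))⁻¹ • (lam 1 - lam 9)
  | 1 => -((Real.sqrt 2 : ℂ))⁻¹ • (lam 5 - lam 14)
  | 2 => lam 15

/-- The non-canonical Bell pair generators `A₁, A₂, A₃` of Eq. (17). -/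
noncomputable def An : Fin 3 → Matrix (Fin 4) (Fin 4) ℂ
  | 0 => ((Real.sqrt 2 : ℂ))⁻¹ • (lam 4 + lam 11)
  | 1 => ((Real.sqrt 2 : ℂ))⁻¹ • (lam 10 - lam 12)
  | 2 => -((1 / 2 : ℂ) • (lam 1 + lam 3 - lam 13 + lam 15))

/-- The non-canonical Bell pair generators `B₁, B₂, B₃` of Eq. (17). -/
noncomputable def Bn : Fin 3 → Matrix (Fin 4) (Fin 4) ℂ
  | 0 => ((Real.sqrt 2 : ℂ))⁻¹ • (lam 7 + lam 9)
  | 1 => -((Real.sqrt 2 : ℂ))⁻¹ • (lam 5 + lam 8)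
  | 2 => (1 / 2 : ℂ) • (lam 1 - lam 3 - lam 13 - lam 15)


section Aux

lemma lamA0eq : lam 4 + lam 11 = !![0, 0, 1, -1; 0, 0, 1, 1; 1, 1, 0, 0; -1, 1, 0, 0] := by
  have h3 : ((3:Fin 4):ℕ) = 3 := rfl
  ext i j
  fin_cases i <;> fin_cases j <;>
    simp [lam, kr, σp, Matrix.kroneckerMap_apply, finProdFinEquiv, Fin.divNat, Fin.modNat, h3,
      Matrix.one_apply, Matrix.vecHead, Matrix.vecTail]

lemma lamA1eq : lam 10 - lam 12 = !![0, 0, Complex.I, -Complex.I; 0, 0, -Complex.I, -Complex.I;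
    -Complex.I, Complex.I, 0, 0; Complex.I, Complex.I, 0, 0] := by
  have h3 : ((3:Fin 4):ℕ) = 3 := rfl
  ext i j
  fin_cases i <;> fin_cases j <;>
    simp [lam, kr, σp, Matrix.kroneckerMap_apply, finProdFinEquiv, Fin.divNat, Fin.modNat, h3,
      Matrix.one_apply, Matrix.vecHead, Matrix.vecTail]

lemma lamA2eq : lam 1 + lam 3 - lam 13 + lam 15 =
    !![2, 0, 0, 0; 0, -2, 0, 0; 0, 0, 0, 2; 0, 0, 2, 0] := by
  have h3 : ((3:Fin 4):ℕ) = 3 := rfl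
  ext i j
  fin_cases i <;> fin_cases j <;>
    simp [lam, kr, σp, Matrix.kroneckerMap_apply, finProdFinEquiv, Fin.divNat, Fin.modNat, h3,
      Matrix.one_apply, Matrix.vecHead, Matrix.vecTail] <;> norm_num

lemma lamB0eq : lam 7 + lam 9 = !![0, 0, 1, 1; 0, 0, 1, -1; 1, 1, 0, 0; 1, -1, 0, 0] := by
  have h3 : ((3:Fin 4):ℕ) = 3 := rfl
  ext i j
  fin_cases i <;> fin_cases j <;>
    simp [lam, kr, σp, Matrix.kroneckerMap_apply, finProdFinEquiv, Fin.divNat, Fin.modNat, h3,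
      Matrix.one_apply, Matrix.vecHead, Matrix.vecTail]

lemma lamB1eq : lam 5 + lam 8 = !![0, 0, -Complex.I, -Complex.I; 0, 0, Complex.I, -Complex.I;
    Complex.I, -Complex.I, 0, 0; Complex.I, Complex.I, 0, 0] := by
  have h3 : ((3:Fin 4):ℕ) = 3 := rfl
  ext i j
  fin_cases i <;> fin_cases j <;>
    simp [lam, kr, σp, Matrix.kroneckerMap_apply, finProdFinEquiv, Fin.divNat, Fin.modNat, h3,
      Matrix.one_apply, Matrix.vecHead, Matrix.vecTail]

lemma lamB2eq : lam 1 - lam 3 - lam 13 - lam 15 =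
    !![-2, 0, 0, 0; 0, 2, 0, 0; 0, 0, 0, 2; 0, 0, 2, 0] := by
  have h3 : ((3:Fin 4):ℕ) = 3 := rfl
  ext i j
  fin_cases i <;> fin_cases j <;>
    simp [lam, kr, σp, Matrix.kroneckerMap_apply, finProdFinEquiv, Fin.divNat, Fin.modNat, h3,
      Matrix.one_apply, Matrix.vecHead, Matrix.vecTail] <;> norm_num

lemma vecState_smul (Ψ : Fin 4 → ℂ) (c : ℂ) (X : Matrix (Fin 4) (Fin 4) ℂ) :
    vecState Ψ (c • X) = c * vecState Ψ X := by
  simp [vecState, Matrix.smul_mulVec, dotProduct_smul]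

lemma vecState_neg (Ψ : Fin 4 → ℂ) (X : Matrix (Fin 4) (Fin 4) ℂ) :
    vecState Ψ (-X) = -vecState Ψ X := by
  simp [vecState, Matrix.neg_mulVec, dotProduct_neg]

set_option maxHeartbeats 2000000 in
lemma zero_of_state (r φ ϑ : ℝ)
    (M : Matrix (Fin 4) (Fin 4) ℂ)
    (hM : M = !![0, 0, 1, -1; 0, 0, 1, 1; 1, 1, 0, 0; -1, 1, 0, 0] ∨
      M = !![0, 0, Complex.I, -Complex.I; 0, 0, -Complex.I, -Complex.I;
        -Complex.I, Complex.I, 0, 0; Complex.I, Complex.I, 0, 0] ∨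
      M = !![2, 0, 0, 0; 0, -2, 0, 0; 0, 0, 0, 2; 0, 0, 2, 0] ∨
      M = !![0, 0, 1, 1; 0, 0, 1, -1; 1, 1, 0, 0; 1, -1, 0, 0] ∨
      M = !![0, 0, -Complex.I, -Complex.I; 0, 0, Complex.I, -Complex.I;
        Complex.I, -Complex.I, 0, 0; Complex.I, Complex.I, 0, 0] ∨
      M = !![-2, 0, 0, 0; 0, 2, 0, 0; 0, 0, 0, 2; 0, 0, 2, 0]) :
    vecState ![((r / Real.sqrt 2 * Real.cos φ : ℝ) : ℂ),
        -((r / Real.sqrt 2 * Real.cos φ : ℝ) : ℂ) * Complex.exp (2 * Complex.I * ϑ),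
        ((r * Real.sin φ : ℝ) : ℂ) * Complex.exp (Complex.I * ϑ),
        Complex.I * ((Real.sqrt (1 - r ^ 2) : ℝ) : ℂ) * Complex.exp (Complex.I * ϑ)] M = 0 := by
  set E := Complex.exp (Complex.I * ϑ) with hEdef
  clear_value E
  have hne : E ≠ 0 := by rw [hEdef]; exact Complex.exp_ne_zero _
  have hE2 : Complex.exp (2 * Complex.I * ϑ) = E ^ 2 := by
    rw [hEdef, ← Complex.exp_nat_mul]; ring_nf
  have hcE : (starRingEnd ℂ) E = E⁻¹ := by
    rw [hEdef, ← Complex.exp_conj, ← Complex.exp_neg]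
    congr 1; simp [Complex.ext_iff]
  have h2 : ((Real.sqrt 2 : ℝ) : ℂ) ≠ 0 := by
    simp [Complex.ofReal_ne_zero]
  rcases hM with h | h | h | h | h | h <;> subst h <;>
    (simp only [vecState, Matrix.mulVec, dotProduct, Fin.sum_univ_four, hE2,
      Matrix.cons_val_zero, Matrix.cons_val_one, Matrix.head_cons, Matrix.cons_val_two,
      Matrix.cons_val_three, Matrix.tail_cons, Matrix.head_fin_const, Pi.star_apply,
      RCLike.star_def, _root_.map_mul, map_neg, map_pow, Complex.conj_ofReal, Complex.conj_I, hcE,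
      Matrix.cons_val', Matrix.empty_val', Matrix.cons_val_fin_one, Matrix.of_apply]
     field_simp [hne, h2]
     ring)

end Aux

theorem stmt_19 (r φ ϑ : ℝ) (hr : r ∈ Set.Icc (0:ℝ) 1)
    (hφ : φ ∈ Set.Icc (0:ℝ) (Real.pi / 2)) (hϑ : ϑ ∈ Set.Icc (0:ℝ) (2 * Real.pi))
    (Ψ : Fin 4 → ℂ)
    (hΨ : Ψ = ![((r / Real.sqrt 2 * Real.cos φ : ℝ) : ℂ),
        -((r / Real.sqrt 2 * Real.cos φ : ℝ) : ℂ) * Complex.exp (2 * Complex.I * ϑ),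
        ((r * Real.sin φ : ℝ) : ℂ) * Complex.exp (Complex.I * ϑ),
        Complex.I * ((Real.sqrt (1 - r ^ 2) : ℝ) : ℂ) * Complex.exp (Complex.I * ϑ)]) :
    (∀ i, vecState Ψ (An i) = 0) ∧ (∀ j, vecState Ψ (Bn j) = 0) := by
  subst hΨ
  have hs2 : ((Real.sqrt 2 : ℝ) : ℂ) = (Real.sqrt 2 : ℂ) := rfl
  constructor
  · intro i
    fin_cases i
    · show vecState _ (((Real.sqrt 2 : ℂ))⁻¹ • (lam 4 + lam 11)) = 0
      rw [lamA0eq, vecState_smul, zero_of_state r φ ϑ _ (Or.inl rfl), mul_zero]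
    · show vecState _ (((Real.sqrt 2 : ℂ))⁻¹ • (lam 10 - lam 12)) = 0
      rw [lamA1eq, vecState_smul, zero_of_state r φ ϑ _ (Or.inr (Or.inl rfl)), mul_zero]
    · show vecState _ (-((1 / 2 : ℂ) • (lam 1 + lam 3 - lam 13 + lam 15))) = 0
      rw [lamA2eq, vecState_neg, vecState_smul,
        zero_of_state r φ ϑ _ (Or.inr (Or.inr (Or.inl rfl))), mul_zero, neg_zero]
  · intro j
    fin_cases j
    · show vecState _ (((Real.sqrt 2 : ℂ))⁻¹ • (lam 7 + lam 9)) = 0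
      rw [lamB0eq, vecState_smul,
        zero_of_state r φ ϑ _ (Or.inr (Or.inr (Or.inr (Or.inl rfl)))), mul_zero]
    · show vecState _ (-((Real.sqrt 2 : ℂ))⁻¹ • (lam 5 + lam 8)) = 0
      rw [lamB1eq, vecState_smul,
        zero_of_state r φ ϑ _ (Or.inr (Or.inr (Or.inr (Or.inr (Or.inl rfl))))), mul_zero]
    · show vecState _ ((1 / 2 : ℂ) • (lam 1 - lam 3 - lam 13 - lam 15)) = 0
      rw [lamB2eq, vecState_smul,
        zero_of_state r φ ϑ _ (Or.inr (Or.inr (Or.inr (Or.inr (Or.inr rfl))))), mul_zero]
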